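/- Let X = (x_0,…,x_{d+1}) be a simplex in ℝ^{d+1} with convex hull K, and let L be an arbitrary affine d-plane. Then the width of K satisfies w(X) ≤ √2 · D_2(X, L), where D_2(X,L)^2 = Σ_{i=0}^{d+1} dist(x_i, L)^2. -/

import Mathlib

open Metric Module

set_option maxHeartbeats 1000000 in
theorem aux_width {E : Type*} [NormedAddCommGroup E] [InnerProductSpace ℝ E]
    [FiniteDimensional ℝ E] (d : ℕ) (hdimE : finrank ℝ E = d + 1)
    (X : Fin (d + 2) → E) (L : AffineSubspace ℝ E)
    (hLdim : Module.finrank ℝ L.direction = d)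
    (hLne : (L : Set E).Nonempty) :
    (⨅ L' : {M : AffineSubspace ℝ E //
        Module.finrank ℝ M.direction = d ∧ (M : Set E).Nonempty},
      2 * ⨆ p : convexHull ℝ (Set.range X),
        Metric.infDist (p : E) ((L' : AffineSubspace ℝ E) : Set E)) ≤
      Real.sqrt 2 *
        Real.sqrt (∑ i, Metric.infDist (X i) (L : Set E) ^ 2) := by
  classical
  obtain ⟨p₀, hp₀⟩ := hLne
  have hdimperp : finrank ℝ (L.direction)ᗮ = 1 := by
    have h := Submodule.finrank_add_finrank_orthogonal (K := L.direction)
    rw [hdimE, hLdim] at h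
    omega
  obtain ⟨n', hn'mem, hn'ne⟩ : ∃ v ∈ (L.direction)ᗮ, v ≠ 0 := by
    have : (L.direction)ᗮ ≠ ⊥ := by
      intro h
      rw [h] at hdimperp; simp at hdimperp
    obtain ⟨v, hv, hvne⟩ := Submodule.exists_mem_ne_zero_of_ne_bot this
    exact ⟨v, hv, hvne⟩
  set n : E := ‖n'‖⁻¹ • n' with hn_def
  have hnmem : n ∈ (L.direction)ᗮ := Submodule.smul_mem _ _ hn'mem
  have hnorm : ‖n‖ = 1 := norm_smul_inv_norm hn'ne
  -- characterize membership in `L.direction` by orthogonality to `n`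
  have hspan : Submodule.span ℝ {n} = (L.direction)ᗮ := by
    apply Submodule.eq_of_le_of_finrank_le
    · rw [Submodule.span_le, Set.singleton_subset_iff]; exact hnmem
    · rw [hdimperp, finrank_span_singleton]
      intro h; rw [h, norm_zero] at hnorm; norm_num at hnorm
  have hdir : ∀ w : E, w ∈ L.direction ↔ inner ℝ w n = (0 : ℝ) := by
    intro w
    constructor
    · intro hw
      exact (Submodule.mem_orthogonal _ n).mp hnmem w hw
    · intro hw
      have : w ∈ ((L.direction)ᗮ)ᗮ := by
        rw [← hspan, Submodule.mem_orthogonal]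
        intro u hu
        obtain ⟨c, rfl⟩ := Submodule.mem_span_singleton.mp hu
        rw [real_inner_smul_left, real_inner_comm, hw, mul_zero]
      rwa [Submodule.orthogonal_orthogonal] at this
  -- the linear functional
  set g : E → ℝ := fun x => inner ℝ x n with hg_def
  have hglin : IsLinearMap ℝ g := by
    constructor
    · intro x y; simp [hg_def, inner_add_left]
    · intro c x; simp [hg_def, real_inner_smul_left]
  -- on `L`, `g` is constant equal to `g p₀`
  have hgL : ∀ q ∈ L, g q = g p₀ := by
    intro q hq
    have : q -ᵥ p₀ ∈ L.direction := AffineSubspace.vsub_mem_direction hq hp₀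
    have h0 : inner ℝ (q - p₀) n = (0 : ℝ) := (hdir _).mp this
    have : g q - g p₀ = inner ℝ (q - p₀) n := by
      simp only [hg_def]; rw [inner_sub_left]
    rw [h0] at this; linarith
  -- distance from any point to `L` bounds `|g x - g p₀|`
  have hdistL : ∀ x : E, |g x - g p₀| ≤ infDist x (L : Set E) := by
    intro x
    have : Nonempty (L : Set E) := ⟨⟨p₀, hp₀⟩⟩
    rw [infDist_eq_iInf]
    refine le_ciInf fun ⟨q, hq⟩ => ?_
    have h1 : g x - g p₀ = inner ℝ (x - q) n := by
      have h2 := hgL q hq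
      simp only [hg_def] at h2 ⊢
      rw [inner_sub_left, h2]
    rw [h1]
    calc |inner ℝ (x - q) n| ≤ ‖x - q‖ * ‖n‖ := abs_real_inner_le_norm _ _
      _ = dist x q := by rw [hnorm, mul_one, dist_eq_norm]
  -- extremes of `g` over the vertices
  have hne : (Finset.univ : Finset (Fin (d + 2))).Nonempty := ⟨0, Finset.mem_univ 0⟩
  set a : ℝ := Finset.univ.sup' hne (fun i => g (X i)) with ha_def
  set b : ℝ := Finset.univ.inf' hne (fun i => g (X i)) with hb_def
  obtain ⟨i₀, -, hi₀⟩ := Finset.exists_mem_eq_sup' hne (fun i => g (X i))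
  obtain ⟨j₀, -, hj₀⟩ := Finset.exists_mem_eq_inf' hne (fun i => g (X i))
  have hba : b ≤ a := by
    rw [ha_def, hb_def]
    exact le_trans (Finset.inf'_le (fun i => g (X i)) (Finset.mem_univ (0 : Fin (d+2))))
      (Finset.le_sup' (α := ℝ) (fun i => g (X i)) (Finset.mem_univ (0 : Fin (d+2))))
  set m : ℝ := (a + b) / 2 with hm_def
  -- the translated plane
  set v : E := (m - g p₀) • n with hv_def
  set L' : AffineSubspace ℝ E :=
    L.map (AffineEquiv.constVAdd ℝ E v).toAffineMap with hL'_def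
  have hL'dir : L'.direction = L.direction := by
    rw [hL'_def, AffineSubspace.map_direction]
    simp
  have hL'ne : (L' : Set E).Nonempty := ⟨v +ᵥ p₀, AffineSubspace.mem_map.2 ⟨p₀, hp₀, rfl⟩⟩
  -- bound on `g` over the convex hull
  have hhull : ∀ x ∈ convexHull ℝ (Set.range X), b ≤ g x ∧ g x ≤ a := by
    intro x hx
    have hsub : Set.range X ⊆ {y | b ≤ g y} ∩ {y | g y ≤ a} := by
      rintro y ⟨i, rfl⟩
      refine ⟨?_, ?_⟩
      · show b ≤ g (X i)
        rw [hb_def]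
        exact Finset.inf'_le (fun i => g (X i)) (Finset.mem_univ i)
      · show g (X i) ≤ a
        rw [ha_def]
        exact Finset.le_sup' (α := ℝ) (fun i => g (X i)) (Finset.mem_univ i)
    have hconv : Convex ℝ ({y | b ≤ g y} ∩ {y | g y ≤ a}) :=
      (convex_halfSpace_ge hglin b).inter (convex_halfSpace_le hglin a)
    exact (convexHull_min hsub hconv hx : _)
  -- distance from any hull point to `L'` is at most `(a - b)/2`
  have hdistL' : ∀ x ∈ convexHull ℝ (Set.range X),
      infDist x (L' : Set E) ≤ (a - b) / 2 := by
    intro x hx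
    set q : E := x - (g x - m) • n with hq_def
    have hqmem : q ∈ L' := by
      refine AffineSubspace.mem_map.2 ⟨q - v, ?_, by simp [vadd_eq_add]⟩
      have : (q - v) -ᵥ p₀ ∈ L.direction := by
        rw [hdir]
        have : (q - v) -ᵥ p₀ = (x - p₀) - ((g x - m) • n + (m - g p₀) • n) := by
          simp [hq_def, hv_def, vsub_eq_sub]; abel
        rw [this]
        have hnn : (inner ℝ n n : ℝ) = 1 := by
          rw [real_inner_self_eq_norm_sq, hnorm]; norm_num
        simp only [inner_sub_left, inner_add_left, real_inner_smul_left, hnn, hg_def]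
        ring
      exact (AffineSubspace.vsub_right_mem_direction_iff_mem hp₀ _).mp this
    calc infDist x (L' : Set E) ≤ dist x q := infDist_le_dist_of_mem hqmem
      _ = |g x - m| := by
          rw [dist_eq_norm, hq_def]
          simp [norm_smul, hnorm]
      _ ≤ (a - b) / 2 := by
          obtain ⟨h1, h2⟩ := hhull x hx
          rw [abs_le]; constructor <;> [skip; skip] <;> simp [hm_def] <;> linarith
  -- the main width bound for `L'`
  have hK : Nonempty (convexHull ℝ (Set.range X)) :=
    ⟨⟨X 0, subset_convexHull ℝ _ ⟨0, rfl⟩⟩⟩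
  have hsup : (⨆ p : convexHull ℝ (Set.range X), infDist (p : E) (L' : Set E))
      ≤ (a - b) / 2 :=
    ciSup_le fun ⟨p, hp⟩ => hdistL' p hp
  -- final inequality `a - b ≤ √2 * √(∑ dᵢ²)`
  set S : ℝ := ∑ i, infDist (X i) (L : Set E) ^ 2 with hS_def
  have hSnonneg : 0 ≤ S := Finset.sum_nonneg fun i _ => sq_nonneg _
  have hab2 : (a - b) ^ 2 ≤ 2 * S := by
    have hia : a = g (X i₀) := ha_def.trans hi₀
    have hjb : b = g (X j₀) := hb_def.trans hj₀
    by_cases hij : i₀ = j₀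
    · have : a = b := by rw [hia, hjb, hij]
      rw [this]; simp; positivity
    · set t : ℝ := g p₀ with ht_def
      have h1 : |a - t| ≤ infDist (X i₀) (L : Set E) := by rw [hia]; exact hdistL _
      have h2 : |b - t| ≤ infDist (X j₀) (L : Set E) := by rw [hjb]; exact hdistL _
      have h1' : (a - t) ^ 2 ≤ infDist (X i₀) (L : Set E) ^ 2 := by
        rw [← sq_abs]; exact pow_le_pow_left₀ (abs_nonneg _) h1 2
      have h2' : (b - t) ^ 2 ≤ infDist (X j₀) (L : Set E) ^ 2 := by
        rw [← sq_abs]; exact pow_le_pow_left₀ (abs_nonneg _) h2 2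
      have hpair : infDist (X i₀) (L : Set E) ^ 2 + infDist (X j₀) (L : Set E) ^ 2 ≤ S := by
        have hsub2 := Finset.sum_le_sum_of_subset_of_nonneg
          (Finset.subset_univ ({i₀, j₀} : Finset (Fin (d+2))))
          (fun i _ _ => sq_nonneg (infDist (X i) (L : Set E)))
        rw [Finset.sum_pair hij] at hsub2
        exact le_of_le_of_eq hsub2 hS_def.symm
      have hsum : (a - t) ^ 2 + (b - t) ^ 2 ≤ S := by linarith
      clear_value a b t S
      nlinarith [sq_nonneg ((a - t) + (b - t))]
  have hfinal : a - b ≤ Real.sqrt 2 * Real.sqrt S := by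
    rw [← Real.sqrt_mul (by norm_num : (0:ℝ) ≤ 2)]
    exact (Real.le_sqrt (by linarith) (by positivity)).mpr hab2
  -- assemble
  have hbdd : BddBelow (Set.range fun L' : {M : AffineSubspace ℝ E //
      finrank ℝ M.direction = d ∧ (M : Set E).Nonempty} =>
      2 * ⨆ p : convexHull ℝ (Set.range X), infDist (p : E)
        ((L' : AffineSubspace ℝ E) : Set E)) := by
    refine ⟨0, ?_⟩
    rintro r ⟨M, rfl⟩
    have h0 : 0 ≤ ⨆ p : convexHull ℝ (Set.range X), infDist (p : E)
        ((M : AffineSubspace ℝ E) : Set E) :=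
      Real.iSup_nonneg fun p => infDist_nonneg
    show (0:ℝ) ≤ 2 * ⨆ p : convexHull ℝ (Set.range X), infDist (p : E)
        ((M : AffineSubspace ℝ E) : Set E)
    linarith
  refine le_trans (ciInf_le hbdd ⟨L', by rw [hL'dir]; exact hLdim, hL'ne⟩) ?_
  calc 2 * (⨆ p : convexHull ℝ (Set.range X), infDist (p : E) (L' : Set E))
      ≤ 2 * ((a - b) / 2) := by linarith
    _ = a - b := by ring
    _ ≤ Real.sqrt 2 * Real.sqrt S := hfinal


/-- The width of the convex hull of a simplex `X = (x_0,…,x_{d+1})` in `ℝ^{d+1}`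
is at most `√2 · D_2(X, L)` for any affine `d`-plane `L`.  The width is twice the
infimum over affine `d`-planes `L'` of the maximal distance from the hull to `L'`. -/
theorem stmt_4 (d : ℕ) (X : Fin (d + 2) → EuclideanSpace ℝ (Fin (d + 1)))
    (L : AffineSubspace ℝ (EuclideanSpace ℝ (Fin (d + 1))))
    (hLdim : Module.finrank ℝ L.direction = d)
    (hLne : (L : Set (EuclideanSpace ℝ (Fin (d + 1)))).Nonempty) :
    (⨅ L' : {M : AffineSubspace ℝ (EuclideanSpace ℝ (Fin (d + 1))) //
        Module.finrank ℝ M.direction = d ∧ (M : Set (EuclideanSpace ℝ (Fin (d + 1)))).Nonempty},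
      2 * ⨆ p : convexHull ℝ (Set.range X),
        Metric.infDist (p : EuclideanSpace ℝ (Fin (d + 1)))
          ((L' : AffineSubspace ℝ (EuclideanSpace ℝ (Fin (d + 1)))) :
            Set (EuclideanSpace ℝ (Fin (d + 1))))) ≤
      Real.sqrt 2 *
        Real.sqrt
          (∑ i, Metric.infDist (X i) (L : Set (EuclideanSpace ℝ (Fin (d + 1)))) ^ 2) := by
  exact aux_width d (by simp [finrank_euclideanSpace]) X L hLdim hLne
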